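/- Let A be an associative (unital) ring in which p·1 = 0 for a prime p, and let x, y ∈ A. Then (x + y)^p − x^p − y^p lies in the Lie subring of A generated by x and y, i.e. in the smallest additive subgroup of A containing x and y that is closed under the commutator bracket [a,b] = a*b − b*a. -/

import Mathlib

open Polynomial Finset

/-- Sum of "inner" products expressed via iterated commutators with binomial
coefficients (key combinatorial identity for Jacobson's formula). -/
private lemma jac_ad_pow_sum {S : Type*} [Ring S] (u a : S) (n : ℕ) :
    ∑ i ∈ range (n+1), u^i * a * u^(n-i)
      = ∑ k ∈ range (n+1),
          (n+1).choose (k+1) • ((fun b => u*b - b*u)^[k] a * u^(n-k)) := by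
  induction n with
  | zero => simp
  | succ n ih =>
    set f : S → S := fun b => u*b - b*u with hf
    have hL : ∑ i ∈ range (n+2), u^i * a * u^(n+1-i)
        = u * (∑ i ∈ range (n+1), u^i * a * u^(n-i)) + a * u^(n+1) := by
      rw [Finset.sum_range_succ']
      simp only [pow_zero, one_mul, Nat.sub_zero]
      congr 1
      rw [Finset.mul_sum]
      refine Finset.sum_congr rfl fun i hi => ?_
      have h1 : n + 1 - (i + 1) = n - i := by omega
      rw [h1, pow_succ']
      noncomm_ring
    have hmid : ∑ k ∈ range (n+1),
          u * ((n+1).choose (k+1) • (f^[k] a * u^(n-k)))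
        = (∑ k ∈ range (n+1), (n+1).choose (k+1) • (f^[k+1] a * u^(n-k)))
          + ∑ k ∈ range (n+1), (n+1).choose (k+1) • (f^[k] a * u^(n+1-k)) := by
      rw [← Finset.sum_add_distrib]
      refine Finset.sum_congr rfl fun k hk => ?_
      have hk' : k ≤ n := Nat.lt_succ_iff.mp (mem_range.mp hk)
      have h1 : n + 1 - k = (n - k) + 1 := by omega
      have h2 : f^[k+1] a = u * f^[k] a - f^[k] a * u := by
        rw [Function.iterate_succ_apply']
      rw [mul_smul_comm, ← smul_add, h1, h2]
      congr 1
      rw [pow_succ']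
      noncomm_ring
    have hR : ∑ k ∈ range (n+2), (n+2).choose (k+1) • (f^[k] a * u^(n+1-k))
        = (∑ k ∈ range (n+2), (n+1).choose k • (f^[k] a * u^(n+1-k)))
          + ∑ k ∈ range (n+2), (n+1).choose (k+1) • (f^[k] a * u^(n+1-k)) := by
      rw [← Finset.sum_add_distrib]
      refine Finset.sum_congr rfl fun k hk => ?_
      rw [← add_smul, Nat.choose_succ_succ (n+1) k]
    have hR1 : ∑ k ∈ range (n+2), (n+1).choose k • (f^[k] a * u^(n+1-k))
        = (∑ k ∈ range (n+1), (n+1).choose (k+1) • (f^[k+1] a * u^(n-k)))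
          + a * u^(n+1) := by
      rw [Finset.sum_range_succ']
      simp only [Nat.choose_zero_right, one_smul, Function.iterate_zero_apply,
        Nat.sub_zero]
      congr 1
      refine Finset.sum_congr rfl fun k hk => ?_
      have hk' : k ≤ n := Nat.lt_succ_iff.mp (mem_range.mp hk)
      have h1 : n + 1 - (k + 1) = n - k := by omega
      rw [h1]
    have hR2 : ∑ k ∈ range (n+2), (n+1).choose (k+1) • (f^[k] a * u^(n+1-k))
        = ∑ k ∈ range (n+1), (n+1).choose (k+1) • (f^[k] a * u^(n+1-k)) := by
      rw [Finset.sum_range_succ, Nat.choose_succ_self, zero_smul, add_zero]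
    rw [hL, ih, Finset.mul_sum, hmid, hR, hR1, hR2]
    abel

/-- Derivative of a power, noncommutative version. -/
private lemma jac_derivative_pow {A : Type*} [Ring A] (u : A[X]) (n : ℕ) :
    derivative (u ^ (n+1))
      = ∑ i ∈ range (n+1), u^i * derivative u * u^(n-i) := by
  induction n with
  | zero => simp
  | succ n ih =>
    have hR : ∑ i ∈ range (n+2), u^i * derivative u * u^(n+1-i)
        = (∑ i ∈ range (n+1), u * (u^i * derivative u * u^(n-i)))
          + derivative u * u^(n+1) := by
      rw [Finset.sum_range_succ']
      simp only [pow_zero, one_mul, Nat.sub_zero]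
      congr 1
      refine Finset.sum_congr rfl fun i hi => ?_
      have h1 : n + 1 - (i + 1) = n - i := by omega
      rw [h1, pow_succ']
      noncomm_ring
    rw [pow_succ', derivative_mul, ih, Finset.mul_sum, hR]
    abel

/-- **Jacobson's identity (weak form).** In an associative unital ring `A` of
characteristic `p` (`p` prime), `(x+y)^p - x^p - y^p` lies in the smallest additive
subgroup of `A` containing `x` and `y` that is closed under the commutator bracket
`[a,b] = a*b - b*a`, i.e. in the Lie subring generated by `x` and `y`. -/
theorem jacobson_identity_lie_element (A : Type*) [Ring A] (p : ℕ) (hp : p.Prime)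
    (hchar : (p : A) = 0) (x y : A) :
    ∀ H : AddSubgroup A, x ∈ H → y ∈ H →
      (∀ a ∈ H, ∀ b ∈ H, a * b - b * a ∈ H) →
      (x + y) ^ p - x ^ p - y ^ p ∈ H := by
  intro H hx hy hbr
  set u : A[X] := C x * X + C y with hu
  set f : A[X] → A[X] := fun b => u*b - b*u with hf
  have hcharX : (p : A[X]) = 0 := by
    rw [← map_natCast (C : A →+* A[X]) p, hchar, map_zero]
  have hsmul0 : ∀ (z : A[X]), p • z = 0 := fun z => by
    rw [nsmul_eq_mul, hcharX, zero_mul]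
  have hsmul0A : ∀ (z : A), p • z = 0 := fun z => by
    rw [nsmul_eq_mul, hchar, zero_mul]
  have hdu : derivative u = C x := by
    rw [hu, derivative_add, derivative_C, add_zero, derivative_C_mul_X]
  -- coefficients of iterated commutators lie in H
  have hgood : ∀ k n, ((f^[k]) (C x)).coeff n ∈ H := by
    intro k
    induction k with
    | zero =>
      intro n
      rw [Function.iterate_zero_apply, coeff_C]
      split
      · exact hx
      · exact zero_mem H
    | succ k ih =>
      intro n
      set Q : A[X] := f^[k] (C x) with hQ
      have hfQ : f^[k+1] (C x)
          = (C x * Q - Q * C x) * X + (C y * Q - Q * C y) := by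
        rw [Function.iterate_succ_apply', ← hQ]
        show u * Q - Q * u = _
        rw [hu]
        have hX : C x * X * Q = C x * Q * X := by
          rw [mul_assoc, X_mul, ← mul_assoc]
        rw [add_mul, mul_add, hX]
        noncomm_ring
      rw [hfQ]
      rcases n with _ | n
      · simp only [coeff_add, coeff_mul_X_zero, zero_add, coeff_sub, coeff_C_mul,
          coeff_mul_C]
        exact hbr y hy _ (ih 0)
      · simp only [coeff_add, coeff_mul_X, coeff_sub, coeff_C_mul, coeff_mul_C]
        exact add_mem (hbr x hx _ (ih n)) (hbr y hy _ (ih (n+1)))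
  -- the derivative of u^p
  obtain ⟨m, hm⟩ : ∃ m, p = m + 1 := ⟨p - 1, (Nat.succ_pred_eq_of_pos hp.pos).symm⟩
  have hd : derivative (u ^ p) = f^[m] (C x) := by
    rw [hm, jac_derivative_pow, hdu, jac_ad_pow_sum]
    rw [Finset.sum_eq_single m]
    · rw [Nat.sub_self, pow_zero, mul_one, Nat.choose_self, one_smul]
    · intro k hk hne
      have hklt : k < m := lt_of_le_of_ne (Nat.lt_succ_iff.mp (mem_range.mp hk)) hne
      have hdvd : p ∣ (m+1).choose (k+1) := by
        rw [← hm]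
        exact hp.dvd_choose_self (Nat.succ_ne_zero k) (by omega)
      obtain ⟨c, hc⟩ := hdvd
      rw [hc, mul_smul, hsmul0]
    · intro hmem
      exact absurd (mem_range.mpr (Nat.lt_succ_self m)) hmem
  -- middle coefficients lie in H
  have hcoeff : ∀ k, 1 ≤ k → k < p → (u ^ p).coeff k ∈ H := by
    intro k h1 h2
    obtain ⟨n, rfl⟩ : ∃ n, k = n + 1 := ⟨k - 1, by omega⟩
    set c : A := (u ^ p).coeff (n+1) with hcdef
    have hmc : (n+1) • c ∈ H := by
      have h := coeff_derivative (u ^ p) n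
      rw [hd] at h
      have hc2 : ((n : A) + 1) * c = c * ((n : A) + 1) := by
        have h3 := (Nat.cast_commute (n+1) c).eq
        push_cast at h3
        exact h3
      have heq : (n+1) • c = ((f^[m]) (C x)).coeff n := by
        rw [h, nsmul_eq_mul]
        push_cast
        exact hc2
      rw [heq]
      exact hgood m n
    have hcop : Nat.Coprime (n+1) p :=
      (Nat.coprime_of_lt_prime (Nat.succ_ne_zero n) h2 hp).symm
    have hbez := Nat.gcd_eq_gcd_ab (n+1) p
    rw [Nat.Coprime.gcd_eq_one hcop] at hbez
    have key : c = (Nat.gcdA (n+1) p) • ((n+1) • c) := by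
      calc c = ((1 : ℕ) : ℤ) • c := by simp
        _ = (((n+1 : ℕ) : ℤ) * Nat.gcdA (n+1) p
              + ((p : ℕ) : ℤ) * Nat.gcdB (n+1) p) • c := by rw [← hbez]
        _ = (Nat.gcdA (n+1) p * ((n+1 : ℕ) : ℤ)) • c
              + (Nat.gcdB (n+1) p * ((p : ℕ) : ℤ)) • c := by
            rw [add_smul, mul_comm ((Nat.gcdA (n+1) p)) _,
              mul_comm ((Nat.gcdB (n+1) p)) _]
        _ = (Nat.gcdA (n+1) p) • ((n+1) • c) := by
            rw [mul_smul, mul_smul, natCast_zsmul, natCast_zsmul, hsmul0A,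
              smul_zero, add_zero]
    rw [key]
    exact zsmul_mem hmc _
  -- constant coefficient
  have hu0 : u.coeff 0 = y := by simp [hu]
  have hc0 : ∀ n : ℕ, (u ^ n).coeff 0 = y ^ n := by
    intro n
    induction n with
    | zero => simp
    | succ n ih => rw [pow_succ, mul_coeff_zero, ih, hu0, pow_succ]
  -- degree bound
  have hu1deg : u.natDegree ≤ 1 := by
    apply le_trans (natDegree_add_le _ _)
    refine max_le (le_trans (natDegree_C_mul_le _ _) natDegree_X_le) ?_
    simp
  have hdeg : ∀ n : ℕ, (u ^ n).natDegree ≤ n := by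
    intro n
    calc (u^n).natDegree ≤ n * u.natDegree := natDegree_pow_le
      _ ≤ n * 1 := Nat.mul_le_mul_left n hu1deg
      _ = n := mul_one n
  have hu1 : u.coeff 1 = x := by simp [hu, coeff_C]
  -- top coefficient
  have htop : ∀ n : ℕ, (u ^ n).coeff n = x ^ n := by
    intro n
    induction n with
    | zero => simp
    | succ n ih =>
      rw [pow_succ, coeff_mul, Finset.sum_eq_single (n, 1)]
      · rw [ih, hu1, pow_succ]
      · rintro ⟨i, j⟩ hmem hne
        rw [Finset.HasAntidiagonal.mem_antidiagonal] at hmem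
        rcases Nat.lt_or_ge n i with hi | hi
        · rw [coeff_eq_zero_of_natDegree_lt (lt_of_le_of_lt (hdeg n) hi), zero_mul]
        · have hne' : ¬(i = n ∧ j = 1) := by
            intro hij
            exact hne (by simp [hij.1, hij.2])
          have hj2 : 2 ≤ j := by omega
          rw [coeff_eq_zero_of_natDegree_lt (lt_of_le_of_lt hu1deg hj2), mul_zero]
      · intro hnm
        exact absurd (Finset.HasAntidiagonal.mem_antidiagonal.mpr (by omega)) hnm
  -- evaluation at 1
  have hev_eq : ∀ Q : A[X], eval₂RingHom' (RingHom.id A) 1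
      (fun a => Commute.one_right a) Q = Q.eval 1 := fun Q => rfl
  have hevu : u.eval 1 = x + y := by
    rw [hu]
    simp [eval_C_mul]
  have hevP : (u ^ p).eval 1 = (x + y) ^ p := by
    rw [← hev_eq, map_pow, hev_eq, hevu]
  have hsum : (u ^ p).eval 1 = ∑ i ∈ range (p+1), (u ^ p).coeff i := by
    rw [eval_eq_sum_range' (lt_of_le_of_lt (hdeg p) (Nat.lt_succ_self p))]
    simp
  -- assemble
  have hsplit : (x + y) ^ p
      = (∑ i ∈ range m, (u ^ p).coeff (i+1)) + y ^ p + x ^ p := by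
    rw [← hevP, hsum, Finset.sum_range_succ, htop p]
    congr 1
    rw [show range p = range (m+1) by rw [hm], Finset.sum_range_succ', hc0 p]
  have hS : (∑ i ∈ range m, (u ^ p).coeff (i+1)) ∈ H := by
    refine sum_mem fun i hi => hcoeff (i+1) (by omega) ?_
    have := mem_range.mp hi
    omega
  have hfin : (x + y) ^ p - x ^ p - y ^ p
      = ∑ i ∈ range m, (u ^ p).coeff (i+1) := by
    rw [hsplit]
    abel
  rw [hfin]
  exact hS
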